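/- Let H be a pseudoexpander. For any pseudomatching M of H, the 0-1 random variables {X_{i,j} : {t_i,t_j} ∈ M} on the probability space on SAT(H) are mutually independent. -/

import Mathlib

open scoped Classical

namespace NBPPaper

/-! ### Literals and assignments.
A literal is a pair `(x, b)` of a variable and a polarity (`true` = positive literal).
A set of literals is a `Finset (Var × Bool)`. -/

/-- A set of literals is consistent: no variable occurs both positively and negatively. -/
def Consistent {Var : Type} (S : Finset (Var × Bool)) : Prop :=
  ∀ x : Var, ¬((x, true) ∈ S ∧ (x, false) ∈ S)

/-- `S` is a set of literals over the variable set `W`. -/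
def LitsOver {Var : Type} (W : Finset Var) (S : Finset (Var × Bool)) : Prop :=
  Consistent S ∧ ∀ l ∈ S, l.1 ∈ W

/-- `S` is an assignment of exactly the variables of `W`:
it contains exactly one literal of each variable of `W` and nothing else. -/
def AssignsExactly {Var : Type} (W : Finset Var) (S : Finset (Var × Bool)) : Prop :=
  (∀ l ∈ S, l.1 ∈ W) ∧ ∀ x ∈ W, ∃! b : Bool, (x, b) ∈ S

/-- Satisfaction of a CNF, given as a set of clauses (each clause a set of literals):
every clause contains a literal of `S`. -/
def SatCNF {V : Type} (φ : Set (Finset (V × Bool))) (S : Finset (V × Bool)) : Prop :=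
  ∀ C ∈ φ, ∃ l ∈ C, l ∈ S

/-! ### Nondeterministic branching programs -/

/-- An edge of a nondeterministic branching program over variable type `Var`
with vertex set `Fin n`.  `lab = none` means the edge is unlabelled; the field
`id` allows parallel edges (multigraph). -/
structure NBPEdge (Var : Type) (n : ℕ) where
  src : Fin n
  dst : Fin n
  lab : Option (Var × Bool)
  id : ℕ
deriving DecidableEq

/-- A nondeterministic branching program: a finite DAG (the vertices `Fin n` are
listed in a topological order, i.e. every edge increases the index) with a single
source (the only vertex with no incoming edge) and a single sink (the only vertex
with no outgoing edge). -/
structure NBP (Var : Type) where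
  n : ℕ
  edges : Finset (NBPEdge Var n)
  source : Fin n
  sink : Fin n
  acyc : ∀ e ∈ edges, e.src < e.dst
  source_no_in : ∀ e ∈ edges, e.dst ≠ source
  sink_no_out : ∀ e ∈ edges, e.src ≠ sink
  only_source : ∀ v : Fin n, v ≠ source → ∃ e ∈ edges, e.dst = v
  only_sink : ∀ v : Fin n, v ≠ sink → ∃ e ∈ edges, e.src = v

variable {Var : Type}

/-- The set of literals labelling the edges of a path (a list of edges). -/
def pathLits [DecidableEq Var] {n : ℕ} (p : List (NBPEdge Var n)) : Finset (Var × Bool) :=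
  (p.filterMap NBPEdge.lab).toFinset

/-- The set of variables occurring (as edge labels) on a path. -/
def pathVars [DecidableEq Var] {n : ℕ} (p : List (NBPEdge Var n)) : Finset Var :=
  ((p.filterMap NBPEdge.lab).map Prod.fst).toFinset

/-- The set of vertices visited by a path. -/
def pathVertices {n : ℕ} (p : List (NBPEdge Var n)) : Finset (Fin n) :=
  (p.map NBPEdge.src).toFinset ∪ (p.map NBPEdge.dst).toFinset

/-- The number of occurrences of the variable `x` as an edge label on the path `p`. -/
def occCount [DecidableEq Var] {n : ℕ} (x : Var) (p : List (NBPEdge Var n)) : ℕ :=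
  (p.filterMap NBPEdge.lab).countP (fun l => decide (l.1 = x))

namespace NBP

/-- `p` is a directed path of `Z` from vertex `u` to vertex `v`. -/
def IsPathFrom (Z : NBP Var) (u v : Fin Z.n) (p : List (NBPEdge Var Z.n)) : Prop :=
  p ≠ [] ∧ (∀ e ∈ p, e ∈ Z.edges) ∧ List.Chain' (fun e f => e.dst = f.src) p ∧
    p.head?.map NBPEdge.src = some u ∧ p.getLast?.map NBPEdge.dst = some v

/-- `p` is a source-sink path of `Z`. -/
def IsSourceSink (Z : NBP Var) (p : List (NBPEdge Var Z.n)) : Prop :=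
  Z.IsPathFrom Z.source Z.sink p

/-- A computational path: a source-sink path carrying no two opposite literals. -/
def IsCompPath [DecidableEq Var] (Z : NBP Var) (p : List (NBPEdge Var Z.n)) : Prop :=
  Z.IsSourceSink p ∧ Consistent (pathLits p)

/-- The set `Vars(Z)` of variables whose literals occur on edges of `Z`. -/
def vars [DecidableEq Var] (Z : NBP Var) : Finset Var :=
  Z.edges.biUnion (fun e => (e.lab.map Prod.fst).toFinset)

/-- `Z` is a (syntactic) read-`d`-times NBP. -/
def ReadTimes [DecidableEq Var] (Z : NBP Var) (d : ℕ) : Prop :=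
  ∀ p, Z.IsSourceSink p → ∀ x : Var, occCount x p ≤ d

/-- `Z` is a uniform read-`d`-times NBP: every variable of `Z` occurs exactly `d`
times on every source-sink path. -/
def UniformReadTimes [DecidableEq Var] (Z : NBP Var) (d : ℕ) : Prop :=
  Z.ReadTimes d ∧ ∀ p, Z.IsSourceSink p → ∀ x ∈ Z.vars, occCount x p = d

/-- `Z` computes the Boolean function with variable set `W` whose satisfying
(total) assignments are described by the predicate `F`. -/
def Computes [DecidableEq Var] (Z : NBP Var) (W : Finset Var)
    (F : Finset (Var × Bool) → Prop) : Prop :=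
  Z.vars = W ∧ ∀ S, AssignsExactly W S → (F S ↔ ∃ p, Z.IsCompPath p ∧ pathLits p ⊆ S)

end NBP

/-- `parts` is the partition of the path `p` generated by the vertex set `X`:
`p` is cut into `|X| + 1` consecutive nonempty subpaths whose cut points are
exactly the vertices of `X`. -/
def GeneratesPartition {n : ℕ} (X : Finset (Fin n)) (p : List (NBPEdge Var n))
    (parts : List (List (NBPEdge Var n))) : Prop :=
  p = parts.flatten ∧ parts.length = X.card + 1 ∧ (∀ q ∈ parts, q ≠ []) ∧
    (parts.dropLast.filterMap (fun q => q.getLast?.map NBPEdge.dst)).toFinset = X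

/-- Variables of `Y₁` occur only on parts with even (0-based) index, i.e. odd-numbered
subpaths, and variables of `Y₂` only on parts with odd (0-based) index. -/
def OddEvenSplit [DecidableEq Var] {n : ℕ} (parts : List (List (NBPEdge Var n)))
    (Y₁ Y₂ : Finset Var) : Prop :=
  ∀ k : ℕ, ∀ x ∈ pathVars (parts.getD k []),
    (x ∈ Y₁ → k % 2 = 0) ∧ (x ∈ Y₂ → k % 2 = 1)

/-- The set `X` of vertices of `Z` (containing neither source nor sink) separates the two
disjoint subsets `Y₁, Y₂` of `Vars(Z)`. -/
def NBP.Separates [DecidableEq Var] (Z : NBP Var) (X : Finset (Fin Z.n))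
    (Y₁ Y₂ : Finset Var) : Prop :=
  Disjoint Y₁ Y₂ ∧ Y₁ ⊆ Z.vars ∧ Y₂ ⊆ Z.vars ∧ Z.source ∉ X ∧ Z.sink ∉ X ∧
  ∃ p parts, Z.IsCompPath p ∧ GeneratesPartition X p parts ∧
    (OddEvenSplit parts Y₁ Y₂ ∨ OddEvenSplit parts Y₂ Y₁)

/-! ### Rooted trees -/

/-- A finite rooted tree on (a subset of) the vertex type `V`, given by a parent
function together with a depth function certifying acyclicity. -/
structure RootedTree (V : Type) [DecidableEq V] where
  verts : Finset V
  root : V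
  parent : V → V
  depth : V → ℕ
  root_mem : root ∈ verts
  parent_mem : ∀ v ∈ verts, v ≠ root → parent v ∈ verts
  depth_root : depth root = 0
  depth_parent : ∀ v ∈ verts, v ≠ root → depth v = depth (parent v) + 1

namespace RootedTree

variable {V : Type} [DecidableEq V]

/-- The children of a vertex. -/
def children (T : RootedTree V) (u : V) : Finset V :=
  T.verts.filter (fun v => v ≠ T.root ∧ T.parent v = u)

/-- The leaves of the tree: vertices with no children. -/
def leaves (T : RootedTree V) : Finset V :=
  T.verts.filter (fun v => T.children v = ∅)

/-- The vertex set of the path from the root to `v` (i.e. `v` and all its ancestors). -/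
def pathVerts (T : RootedTree V) (v : V) : Finset V :=
  (Finset.range (T.depth v + 1)).image (fun k => T.parent^[k] v)

/-- The height of the tree: the largest number of vertices on a root-leaf path. -/
def height (T : RootedTree V) : ℕ :=
  (T.verts.sup T.depth) + 1

/-- Every vertex has at most two children. -/
def IsBinary (T : RootedTree V) : Prop :=
  ∀ u ∈ T.verts, (T.children u).card ≤ 2

/-- The tree is extended: none of its leaves has a sibling. -/
def IsExtended (T : RootedTree V) : Prop :=
  ∀ v ∈ T.verts, v ≠ T.root → T.children v = ∅ → T.children (T.parent v) = {v}

/-- The edge set of the tree (as unordered pairs). -/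
def edgeSet (T : RootedTree V) : Finset (Sym2 V) :=
  (T.verts.filter (fun v => v ≠ T.root)).image (fun v => s(v, T.parent v))

end RootedTree

/-! ### Binary-tree-based graphs and pseudoexpanders -/

/-- A binary-tree-based (BTB) graph on the vertex type `V`: an edge-disjoint union of
`m` extended binary rooted trees such that every leaf of one of the trees is a leaf of
exactly two of the trees, any two trees have at most one vertex in common (that vertex
being a leaf of both), and the roots are pairwise distinct. -/
structure BTB (V : Type) [DecidableEq V] [Fintype V] where
  m : ℕ
  tree : Fin m → RootedTree V
  binary : ∀ i, (tree i).IsBinary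
  extended : ∀ i, (tree i).IsExtended
  cover : ∀ v : V, ∃ i, v ∈ (tree i).verts
  edge_disjoint : ∀ i j, i ≠ j → Disjoint ((tree i).edgeSet) ((tree j).edgeSet)
  leaf_two : ∀ i, ∀ v ∈ (tree i).leaves,
    (Finset.univ.filter (fun j => v ∈ (tree j).leaves)).card = 2
  common_le_one : ∀ i j, i ≠ j → ∀ u v,
    u ∈ (tree i).verts → u ∈ (tree j).verts →
    v ∈ (tree i).verts → v ∈ (tree j).verts → u = v
  common_leaf : ∀ i j, i ≠ j → ∀ v, v ∈ (tree i).verts → v ∈ (tree j).verts →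
    v ∈ (tree i).leaves ∧ v ∈ (tree j).leaves
  roots_inj : Function.Injective (fun i => (tree i).root)

namespace BTB

variable {V : Type} [DecidableEq V] [Fintype V]

/-- `ℓ` is the common leaf of the (adjacent) trees `T_i` and `T_j`. -/
def IsCommonLeaf (H : BTB V) (i j : Fin H.m) (ℓ : V) : Prop :=
  i ≠ j ∧ ℓ ∈ (H.tree i).leaves ∧ ℓ ∈ (H.tree j).leaves

/-- The trees `T_i` and `T_j` are adjacent (share a common leaf); equivalently,
`{t_i, t_j}` is a pseudoedge of `H`. -/
def Adjacent (H : BTB V) (i j : Fin H.m) : Prop :=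
  ∃ ℓ, H.IsCommonLeaf i j ℓ

/-- The pseudodegree of the root `t_i`: the number of pseudoedges containing it. -/
noncomputable def pseudodegree (H : BTB V) (i : Fin H.m) : ℕ :=
  (Finset.univ.filter (fun j => H.Adjacent i j)).card

/-- The set of root vertices of `H`. -/
def rootSet (H : BTB V) : Finset V :=
  Finset.univ.image (fun i => (H.tree i).root)

/-- A pseudomatching: a set of pseudoedges (recorded as ordered pairs of root indices
with `i < j`) no two of which share an end. -/
def IsPseudomatching (H : BTB V) (M : Finset (Fin H.m × Fin H.m)) : Prop :=
  (∀ e ∈ M, e.1 < e.2 ∧ H.Adjacent e.1 e.2) ∧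
  ∀ e ∈ M, ∀ f ∈ M, e ≠ f → e.1 ≠ f.1 ∧ e.1 ≠ f.2 ∧ e.2 ≠ f.1 ∧ e.2 ≠ f.2

/-- A pseudomatching between the disjoint sets `U` and `W` of roots (given by their
indices): every pseudoedge of `M` has one end in `U` and the other in `W`. -/
def IsPseudomatchingBetween (H : BTB V) (M : Finset (Fin H.m × Fin H.m))
    (U W : Finset (Fin H.m)) : Prop :=
  H.IsPseudomatching M ∧ ∀ e ∈ M, (e.1 ∈ U ∧ e.2 ∈ W) ∨ (e.1 ∈ W ∧ e.2 ∈ U)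

/-- The set `⋃M` of root vertices matched by the pseudomatching `M`. -/
def matchingRoots (H : BTB V) (M : Finset (Fin H.m × Fin H.m)) : Finset V :=
  M.biUnion (fun e => {(H.tree e.1).root, (H.tree e.2).root})

/-- The vertex set `V(P_{i,j})` of the path connecting the roots `t_i` and `t_j`
through their common leaf `ℓ`. -/
def clauseVerts (H : BTB V) (i j : Fin H.m) (ℓ : V) : Finset V :=
  (H.tree i).pathVerts ℓ ∪ (H.tree j).pathVerts ℓ

/-- `S` satisfies the monotone CNF `φ_H`. -/
def SatisfiesPhi (H : BTB V) (S : Finset (V × Bool)) : Prop :=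
  ∀ i j ℓ, H.IsCommonLeaf i j ℓ → ∃ v ∈ H.clauseVerts i j ℓ, (v, true) ∈ S

/-- `S` falsifies no clause of `φ_H`. -/
def FalsifiesNoClause (H : BTB V) (S : Finset (V × Bool)) : Prop :=
  ∀ i j ℓ, H.IsCommonLeaf i j ℓ → ¬(∀ v ∈ H.clauseVerts i j ℓ, (v, false) ∈ S)

/-- `H` is a pseudoexpander. -/
def IsPseudoexpander (H : BTB V) : Prop :=
  (∀ i, ((H.tree i).height : ℝ) ≤ Real.logb 2 H.m / 4.9 + 3) ∧
  ∀ U W : Finset (Fin H.m), Disjoint U W →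
    (H.m : ℝ) ^ (0.999 : ℝ) ≤ U.card → (H.m : ℝ) ^ (0.999 : ℝ) ≤ W.card →
    ∃ M, H.IsPseudomatchingBetween M U W ∧ (H.m : ℝ) ^ (0.999 : ℝ) / 3 ≤ M.card

/-! #### The probability space on the satisfying assignments of `φ_H` -/

/-- The set `SAT(H)` of satisfying assignments of `φ_H` (total assignments of the
variables `V(H)` satisfying every clause). -/
noncomputable def SATH (H : BTB V) : Finset (Finset (V × Bool)) :=
  Finset.univ.filter (fun S => AssignsExactly Finset.univ S ∧ H.SatisfiesPhi S)

/-- `Fix(S)`: the set of leaf variables `ℓ_{i,j}` occurring positively in `S` such that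
all the other variables of the clause `C_{i,j}` occur negatively in `S`. -/
def Fix (H : BTB V) (S : Finset (V × Bool)) : Set V :=
  {ℓ | ∃ i j, H.IsCommonLeaf i j ℓ ∧ (ℓ, true) ∈ S ∧
      ∀ v ∈ H.clauseVerts i j ℓ, v ≠ ℓ → (v, false) ∈ S}

/-- The probability weight of `S`: `(1/2) ^ |V(H) \ Fix(S)|`. -/
noncomputable def weight (H : BTB V) (S : Finset (V × Bool)) : ℝ :=
  (1 / 2 : ℝ) ^ (Fintype.card V - (H.Fix S).ncard)

/-- The probability of the event `E` in the probability space on `SAT(H)`. -/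
noncomputable def Pr (H : BTB V) (E : Finset (V × Bool) → Prop) : ℝ :=
  ∑ S ∈ H.SATH.filter E, H.weight S

/-- `|S \ Fix(S)|`: the number of literals of `S` that are not fixed. -/
noncomputable def nonFixedCount (H : BTB V) (S : Finset (V × Bool)) : ℕ :=
  (S.filter (fun l => ¬(l.2 = true ∧ l.1 ∈ H.Fix S))).card

/-- `v` and `w` are siblings (in one of the trees of `H`). -/
def Sibling (H : BTB V) (v w : V) : Prop :=
  ∃ k, v ∈ (H.tree k).verts ∧ w ∈ (H.tree k).verts ∧
    v ≠ (H.tree k).root ∧ w ≠ (H.tree k).root ∧ v ≠ w ∧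
    (H.tree k).parent v = (H.tree k).parent w

/-- `S` respects the pseudoedge `{t_i, t_j}`: all non-root variables of `C_{i,j}` occur
negatively in `S` and the siblings of all internal variables of `C_{i,j}` occur
positively in `S`. -/
def Respects (H : BTB V) (i j : Fin H.m) (S : Finset (V × Bool)) : Prop :=
  ∃ ℓ, H.IsCommonLeaf i j ℓ ∧
    (∀ v ∈ H.clauseVerts i j ℓ,
      v ≠ (H.tree i).root → v ≠ (H.tree j).root → (v, false) ∈ S) ∧
    (∀ v ∈ H.clauseVerts i j ℓ,
      v ≠ (H.tree i).root → v ≠ (H.tree j).root → v ≠ ℓ →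
      ∀ w, H.Sibling v w → (w, true) ∈ S)

/-- `S` is `η`-comfortable w.r.t. the pseudomatching `M`: `S` falsifies no clause of
`φ_H` and respects at least `η·|M|` pseudoedges of `M`. -/
noncomputable def Comfortable (H : BTB V) (M : Finset (Fin H.m × Fin H.m)) (η : ℝ)
    (S : Finset (V × Bool)) : Prop :=
  H.FalsifiesNoClause S ∧
    η * M.card ≤ ((M.filter (fun e => H.Respects e.1 e.2 S)).card : ℝ)

/-- `S` is a guarded set of literals. -/
def Guarded (H : BTB V) (S : Finset (V × Bool)) : Prop :=
  Consistent S ∧ ∀ i j ℓ, H.IsCommonLeaf i j ℓ →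
    ((ℓ, true) ∉ S ∧ (ℓ, false) ∉ S) ∨
    (∃ v ∈ H.clauseVerts i j ℓ, v ≠ ℓ ∧ (v, true) ∈ S) ∨
    ((ℓ, true) ∈ S ∧ ∀ v ∈ H.clauseVerts i j ℓ, v ≠ ℓ → (v, false) ∈ S)

/-! #### Matching CNFs and matching OR-CNFs -/

/-- The 'half clause' `C^{1/2}_{i,j}`: the positive clause on the vertices of the path
from `t_i` (if `side = true`) or from `t_j` (if `side = false`) to the common leaf `ℓ`. -/
def halfClause (H : BTB V) (i j : Fin H.m) (ℓ : V) (side : Bool) : Finset (V × Bool) :=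
  (if side then (H.tree i).pathVerts ℓ else (H.tree j).pathVerts ℓ).image (fun v => (v, true))

/-- The matching CNF w.r.t. `M` determined by the side choice `c`: one half clause per
pseudoedge of `M`.  The formulas of `CNF(M)` are exactly the CNFs `matchingCNF H M c`. -/
def matchingCNF (H : BTB V) (M : Finset (Fin H.m × Fin H.m))
    (c : Fin H.m × Fin H.m → Bool) : Set (Finset (V × Bool)) :=
  {C | ∃ e ∈ M, ∃ ℓ, H.IsCommonLeaf e.1 e.2 ℓ ∧ C = H.halfClause e.1 e.2 ℓ (c e)}

/-- A matching OR-CNF w.r.t. `M` is determined by a map `Ψ` assigning to each assignment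
`S₀` of the variables `V(H) \ ⋃M` a matching CNF (given by its side choice `Ψ S₀`);
the formula is `⋁_{S₀} (Conj(S₀) ∧ matchingCNF H M (Ψ S₀))`.  `S` satisfies it iff for
(the) `S₀ ⊆ S`, `S` satisfies the corresponding matching CNF. -/
def SatORCNF (H : BTB V) (M : Finset (Fin H.m × Fin H.m))
    (Ψ : Finset (V × Bool) → (Fin H.m × Fin H.m) → Bool) (S : Finset (V × Bool)) : Prop :=
  ∃ S₀, AssignsExactly (Finset.univ \ H.matchingRoots M) S₀ ∧ S₀ ⊆ S ∧
    SatCNF (H.matchingCNF M (Ψ S₀)) S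

/-- `X` is an `(a, b)`-determining set for the NBP `Z` computing `φ_H`. -/
def IsDeterminingSet (H : BTB V) (Z : NBP V) (a b : ℝ) (X : Finset (Fin Z.n)) : Prop :=
  (X.card : ℝ) ≤ a ∧
  ∃ M : Finset (Fin H.m × Fin H.m), H.IsPseudomatching M ∧ b ≤ (M.card : ℝ) ∧
    ∃ Ψ : Finset (V × Bool) → (Fin H.m × Fin H.m) → Bool,
      ∀ p, Z.IsCompPath p → X ⊆ pathVertices p → H.SatORCNF M Ψ (pathLits p)

end BTB

/-! ### Auxiliary development for Statement 9 -/

section Aux9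

variable {V : Type} [DecidableEq V]

namespace RootedTree

lemma eq_root_of_depth_zero (T : RootedTree V) {v : V} (hv : v ∈ T.verts)
    (h : T.depth v = 0) : v = T.root := by
  by_contra hne
  have := T.depth_parent v hv hne
  omega

lemma iter_parent (T : RootedTree V) {v : V} (hv : v ∈ T.verts) :
    ∀ k, k ≤ T.depth v →
      T.parent^[k] v ∈ T.verts ∧ T.depth (T.parent^[k] v) = T.depth v - k := by
  intro k
  induction k with
  | zero => intro _; exact ⟨hv, by simp⟩
  | succ k ih =>
    intro hk
    obtain ⟨hm, hd⟩ := ih (by omega)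
    have hne : T.parent^[k] v ≠ T.root := by
      intro h
      rw [h, T.depth_root] at hd
      omega
    have hdp := T.depth_parent _ hm hne
    rw [Function.iterate_succ_apply']
    exact ⟨T.parent_mem _ hm hne, by omega⟩

lemma mem_pathVerts_iff (T : RootedTree V) {v w : V} :
    w ∈ T.pathVerts v ↔ ∃ k, k ≤ T.depth v ∧ T.parent^[k] v = w := by
  simp [pathVerts, Finset.mem_image, Finset.mem_range, Nat.lt_succ_iff]

lemma mem_pathVerts_self (T : RootedTree V) (v : V) : v ∈ T.pathVerts v :=
  (mem_pathVerts_iff T).mpr ⟨0, by omega, rfl⟩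

lemma pathVerts_subset (T : RootedTree V) {v : V} (hv : v ∈ T.verts) {w : V}
    (hw : w ∈ T.pathVerts v) : w ∈ T.verts := by
  obtain ⟨k, hk, rfl⟩ := (mem_pathVerts_iff T).mp hw
  exact (T.iter_parent hv k hk).1

lemma mem_verts_of_mem_leaves (T : RootedTree V) {v : V} (h : v ∈ T.leaves) :
    v ∈ T.verts := (Finset.mem_filter.mp h).1

lemma not_leaf_of_mem_pathVerts (T : RootedTree V) {v w : V} (hv : v ∈ T.verts)
    (hw : w ∈ T.pathVerts v) (hne : w ≠ v) : w ∉ T.leaves := by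
  obtain ⟨k, hk, rfl⟩ := (mem_pathVerts_iff T).mp hw
  cases k with
  | zero => simp at hne
  | succ k =>
    intro hleaf
    obtain ⟨hm, hd⟩ := T.iter_parent hv k (by omega)
    have hune : T.parent^[k] v ≠ T.root := by
      intro h; rw [h, T.depth_root] at hd; omega
    have hchild : T.parent^[k] v ∈ T.children (T.parent^[k + 1] v) := by
      simp only [children, Finset.mem_filter]
      exact ⟨hm, hune, (Function.iterate_succ_apply' _ _ _).symm⟩
    rw [leaves, Finset.mem_filter] at hleaf
    rw [hleaf.2] at hchild
    exact absurd hchild (Finset.notMem_empty _)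

end RootedTree

end Aux9

namespace BTB

variable {V : Type} [DecidableEq V] [Fintype V]

/-- `v` is a leaf variable of `H`. -/
def LeafVar (H : BTB V) (v : V) : Prop := ∃ i j, H.IsCommonLeaf i j v

lemma leaves_pair (H : BTB V) {i j : Fin H.m} {v : V} (h : H.IsCommonLeaf i j v) :
    Finset.univ.filter (fun k => v ∈ (H.tree k).leaves) = {i, j} := by
  obtain ⟨hij, hi, hj⟩ := h
  have hcard := H.leaf_two i v hi
  have hsub : ({i, j} : Finset (Fin H.m)) ⊆
      Finset.univ.filter (fun k => v ∈ (H.tree k).leaves) := by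
    intro k hk
    rcases Finset.mem_insert.mp hk with rfl | hk
    · exact Finset.mem_filter.mpr ⟨Finset.mem_univ _, hi⟩
    · rw [Finset.mem_singleton] at hk
      subst hk
      exact Finset.mem_filter.mpr ⟨Finset.mem_univ _, hj⟩
  have hc2 : ({i, j} : Finset (Fin H.m)).card = 2 := by
    rw [Finset.card_insert_of_notMem (by simpa using hij), Finset.card_singleton]
  exact (Finset.eq_of_subset_of_card_le hsub (by rw [hcard, hc2])).symm

lemma not_leafVar_aux (H : BTB V) {c : Fin H.m} {v : V} (hvm : v ∈ (H.tree c).verts)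
    (hvnl : v ∉ (H.tree c).leaves) : ¬ H.LeafVar v := by
  rintro ⟨a, b, hab, hla, hlb⟩
  by_cases hac : a = c
  · exact hvnl (hac ▸ hla)
  · exact hvnl (H.common_leaf a c hac v (RootedTree.mem_verts_of_mem_leaves _ hla) hvm).2

lemma clause_not_leafVar (H : BTB V) {i j : Fin H.m} {ℓ : V} (h : H.IsCommonLeaf i j ℓ)
    {v : V} (hv : v ∈ H.clauseVerts i j ℓ) (hne : v ≠ ℓ) : ¬ H.LeafVar v := by
  rcases Finset.mem_union.mp hv with hv | hv
  · exact not_leafVar_aux H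
      (RootedTree.pathVerts_subset _ (RootedTree.mem_verts_of_mem_leaves _ h.2.1) hv)
      (RootedTree.not_leaf_of_mem_pathVerts _ (RootedTree.mem_verts_of_mem_leaves _ h.2.1) hv hne)
  · exact not_leafVar_aux H
      (RootedTree.pathVerts_subset _ (RootedTree.mem_verts_of_mem_leaves _ h.2.2) hv)
      (RootedTree.not_leaf_of_mem_pathVerts _ (RootedTree.mem_verts_of_mem_leaves _ h.2.2) hv hne)

lemma clauseVerts_mem_verts (H : BTB V) {i j : Fin H.m} {ℓ : V} (h : H.IsCommonLeaf i j ℓ)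
    {v : V} (hv : v ∈ H.clauseVerts i j ℓ) :
    v ∈ (H.tree i).verts ∨ v ∈ (H.tree j).verts := by
  rcases Finset.mem_union.mp hv with hv | hv
  · exact Or.inl (RootedTree.pathVerts_subset _ (RootedTree.mem_verts_of_mem_leaves _ h.2.1) hv)
  · exact Or.inr (RootedTree.pathVerts_subset _ (RootedTree.mem_verts_of_mem_leaves _ h.2.2) hv)

lemma mem_clauseVerts_self (H : BTB V) (i j : Fin H.m) (ℓ : V) :
    ℓ ∈ H.clauseVerts i j ℓ :=
  Finset.mem_union_left _ (RootedTree.mem_pathVerts_self _ _)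

lemma clause_leaf_unique (H : BTB V) {i j : Fin H.m} {ℓ ℓ' : V}
    (h : H.IsCommonLeaf i j ℓ) (h' : H.IsCommonLeaf i j ℓ') : ℓ = ℓ' :=
  H.common_le_one i j h.1 ℓ ℓ'
    (RootedTree.mem_verts_of_mem_leaves _ h.2.1) (RootedTree.mem_verts_of_mem_leaves _ h.2.2)
    (RootedTree.mem_verts_of_mem_leaves _ h'.2.1) (RootedTree.mem_verts_of_mem_leaves _ h'.2.2)

lemma clauseVerts_comm (H : BTB V) (i j : Fin H.m) (ℓ : V) :
    H.clauseVerts i j ℓ = H.clauseVerts j i ℓ := Finset.union_comm _ _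

lemma clause_pair_cases (H : BTB V) {i j a b : Fin H.m} {v : V}
    (h : H.IsCommonLeaf i j v) (h' : H.IsCommonLeaf a b v) :
    (a = i ∧ b = j) ∨ (a = j ∧ b = i) := by
  have hp := leaves_pair H h
  have ha : a ∈ ({i, j} : Finset (Fin H.m)) := by
    rw [← hp]; exact Finset.mem_filter.mpr ⟨Finset.mem_univ _, h'.2.1⟩
  have hb : b ∈ ({i, j} : Finset (Fin H.m)) := by
    rw [← hp]; exact Finset.mem_filter.mpr ⟨Finset.mem_univ _, h'.2.2⟩
  have hab := h'.1
  simp only [Finset.mem_insert, Finset.mem_singleton] at ha hb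
  rcases ha with rfl | rfl <;> rcases hb with hb | hb
  · exact absurd hb.symm hab
  · exact Or.inl ⟨rfl, hb⟩
  · exact Or.inr ⟨rfl, hb⟩
  · exact absurd hb.symm hab

lemma sibling_not_leafVar (H : BTB V) {v w : V} (h : H.Sibling v w) : ¬ H.LeafVar w := by
  obtain ⟨k, hv, hw, hvr, hwr, hvw, hp⟩ := h
  apply not_leafVar_aux H hw
  intro hleaf
  have hch : (H.tree k).children ((H.tree k).parent w) = {w} :=
    H.extended k w hw hwr (Finset.mem_filter.mp hleaf).2
  have hvmem : v ∈ (H.tree k).children ((H.tree k).parent w) := by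
    simp only [RootedTree.children, Finset.mem_filter]
    exact ⟨hv, hvr, hp⟩
  rw [hch, Finset.mem_singleton] at hvmem
  exact hvw hvmem

lemma sibling_mem_tree (H : BTB V) {i j : Fin H.m} {ℓ : V} (h : H.IsCommonLeaf i j ℓ)
    {v w : V} (hv : v ∈ H.clauseVerts i j ℓ) (hvne : v ≠ ℓ) (hs : H.Sibling v w) :
    w ∈ (H.tree i).verts ∨ w ∈ (H.tree j).verts := by
  obtain ⟨k, hvk, hwk, hvr, hwr, hvw, hp⟩ := hs
  rcases Finset.mem_union.mp hv with h1 | h1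
  · left
    have hvi : v ∈ (H.tree i).verts :=
      RootedTree.pathVerts_subset _ (RootedTree.mem_verts_of_mem_leaves _ h.2.1) h1
    have hvnl : v ∉ (H.tree i).leaves :=
      RootedTree.not_leaf_of_mem_pathVerts _ (RootedTree.mem_verts_of_mem_leaves _ h.2.1) h1 hvne
    by_cases hki : k = i
    · exact hki ▸ hwk
    · exact absurd (H.common_leaf k i hki v hvk hvi).2 hvnl
  · right
    have hvj : v ∈ (H.tree j).verts :=
      RootedTree.pathVerts_subset _ (RootedTree.mem_verts_of_mem_leaves _ h.2.2) h1
    have hvnl : v ∉ (H.tree j).leaves :=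
      RootedTree.not_leaf_of_mem_pathVerts _ (RootedTree.mem_verts_of_mem_leaves _ h.2.2) h1 hvne
    by_cases hkj : k = j
    · exact hkj ▸ hwk
    · exact absurd (H.common_leaf k j hkj v hvk hvj).2 hvnl

/-! #### Total assignments as Boolean functions and the repair map -/

/-- The total assignment corresponding to a Boolean function. -/
def toLits (f : V → Bool) : Finset (V × Bool) := Finset.univ.image fun v => (v, f v)

lemma mem_toLits {f : V → Bool} {v : V} {b : Bool} : (v, b) ∈ toLits f ↔ f v = b := by
  constructor
  · intro h
    obtain ⟨u, -, hu⟩ := Finset.mem_image.mp h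
    obtain ⟨h1, h2⟩ := Prod.mk.injEq .. ▸ hu
    exact h1 ▸ h2
  · intro h
    exact Finset.mem_image.mpr ⟨v, Finset.mem_univ _, by rw [h]⟩

/-- The Boolean function corresponding to a total assignment. -/
def valOf (S : Finset (V × Bool)) (v : V) : Bool := if (v, true) ∈ S then true else false

lemma mem_iff_valOf {S : Finset (V × Bool)} (hS : AssignsExactly Finset.univ S)
    {v : V} {b : Bool} : (v, b) ∈ S ↔ valOf S v = b := by
  obtain ⟨b₀, hb₀, huniq⟩ := hS.2 v (Finset.mem_univ v)
  unfold valOf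
  by_cases ht : (v, true) ∈ S
  · rw [if_pos ht]
    have hb : b₀ = true := (huniq true ht).symm
    constructor
    · intro h; exact ((huniq b h).trans hb).symm
    · intro h; rw [← h]; exact ht
  · rw [if_neg ht]
    have hb : b₀ = false := by
      cases hb' : b₀ with
      | false => rfl
      | true => rw [hb'] at hb₀; exact absurd hb₀ ht
    constructor
    · intro h; exact ((huniq b h).trans hb).symm
    · intro h; rw [← h]; exact hb ▸ hb₀

lemma toLits_valOf {S : Finset (V × Bool)} (hS : AssignsExactly Finset.univ S) :
    toLits (valOf S) = S := by
  ext ⟨v, b⟩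
  rw [mem_toLits, mem_iff_valOf hS]

lemma assignsExactly_toLits (f : V → Bool) : AssignsExactly Finset.univ (toLits f) :=
  ⟨fun _ _ => Finset.mem_univ _,
   fun v _ => ⟨f v, mem_toLits.mpr rfl, fun b hb => (mem_toLits.mp hb).symm⟩⟩

/-- The leaf `v` is forced by `g`: all other variables of its clause are false. -/
def Forced (H : BTB V) (g : V → Bool) (v : V) : Prop :=
  ∃ i j, H.IsCommonLeaf i j v ∧ ∀ w ∈ H.clauseVerts i j v, w ≠ v → g w = false

/-- The repaired assignment: forced leaves are set to true. -/
noncomputable def rep (H : BTB V) (g : V → Bool) (v : V) : Bool :=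
  if Forced H g v then true else g v

/-- The satisfying assignment obtained from the coin flips `g`. -/
noncomputable def Sg (H : BTB V) (g : V → Bool) : Finset (V × Bool) := toLits (rep H g)

lemma mem_Sg {H : BTB V} {g : V → Bool} {v : V} {b : Bool} :
    (v, b) ∈ Sg H g ↔ rep H g v = b := mem_toLits

lemma forced_leafVar {H : BTB V} {g : V → Bool} {v : V} (h : Forced H g v) :
    H.LeafVar v := by obtain ⟨i, j, h, -⟩ := h; exact ⟨i, j, h⟩

lemma rep_of_forced {H : BTB V} {g : V → Bool} {v : V} (h : Forced H g v) :
    rep H g v = true := by unfold rep; rw [if_pos h]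

lemma rep_of_not_forced {H : BTB V} {g : V → Bool} {v : V} (h : ¬ Forced H g v) :
    rep H g v = g v := by unfold rep; rw [if_neg h]

lemma rep_of_not_leafVar {H : BTB V} {g : V → Bool} {v : V} (h : ¬ H.LeafVar v) :
    rep H g v = g v := rep_of_not_forced (fun hf => h (forced_leafVar hf))

lemma rep_true_of_true {H : BTB V} {g : V → Bool} {v : V} (h : g v = true) :
    rep H g v = true := by unfold rep; split <;> simp [h]

lemma rep_false {H : BTB V} {g : V → Bool} {v : V} (h : rep H g v = false) :
    g v = false ∧ ¬ Forced H g v := by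
  unfold rep at h
  split at h
  · exact absurd h (by simp)
  · exact ⟨h, by assumption⟩

lemma Sg_mem_SATH (H : BTB V) (g : V → Bool) : Sg H g ∈ H.SATH := by
  rw [SATH, Finset.mem_filter]
  refine ⟨Finset.mem_univ _, assignsExactly_toLits _, ?_⟩
  intro i j ℓ hcl
  by_cases hex : ∃ v ∈ H.clauseVerts i j ℓ, g v = true
  · obtain ⟨v, hv, hgv⟩ := hex
    exact ⟨v, hv, mem_Sg.mpr (rep_true_of_true hgv)⟩
  · push_neg at hex
    simp only [Bool.not_eq_true] at hex
    refine ⟨ℓ, mem_clauseVerts_self H i j ℓ, mem_Sg.mpr ?_⟩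
    exact rep_of_forced ⟨i, j, hcl, fun w hw _ => hex w hw⟩

lemma fix_leafVar {H : BTB V} {S : Finset (V × Bool)} {v : V} (h : v ∈ H.Fix S) :
    H.LeafVar v := by obtain ⟨i, j, h, -, -⟩ := h; exact ⟨i, j, h⟩

lemma mem_fix_Sg {H : BTB V} {g : V → Bool} {v : V} :
    v ∈ H.Fix (Sg H g) ↔ Forced H g v := by
  constructor
  · rintro ⟨i, j, hcl, htrue, hneg⟩
    exact ⟨i, j, hcl, fun w hw hne => (rep_false (mem_Sg.mp (hneg w hw hne))).1⟩
  · rintro ⟨i, j, hcl, hall⟩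
    refine ⟨i, j, hcl, mem_Sg.mpr (rep_of_forced ⟨i, j, hcl, hall⟩), ?_⟩
    intro w hw hne
    rw [mem_Sg, rep_of_not_leafVar (clause_not_leafVar H hcl hw hne)]
    exact hall w hw hne

lemma valOf_Sg {H : BTB V} {g : V → Bool} {v : V} : valOf (Sg H g) v = rep H g v := by
  unfold valOf
  by_cases h : rep H g v = true
  · rw [if_pos (mem_Sg.mpr h), h]
  · rw [if_neg (fun hm => h (mem_Sg.mp hm)), Bool.eq_false_iff.mpr h]

lemma Sg_eq_iff {H : BTB V} {S : Finset (V × Bool)} (hS : S ∈ H.SATH) (g : V → Bool) :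
    Sg H g = S ↔ ∀ v, v ∉ H.Fix S → g v = valOf S v := by
  rw [SATH, Finset.mem_filter] at hS
  obtain ⟨-, hAE, hPhi⟩ := hS
  constructor
  · rintro rfl
    intro v hv
    have hnf : ¬ Forced H g v := fun h => hv (mem_fix_Sg.mpr h)
    rw [valOf_Sg, rep_of_not_forced hnf]
  · intro hag
    have hCF : ∀ v, Forced H g v ↔ v ∈ H.Fix S := by
      intro v
      constructor
      · rintro ⟨i, j, hcl, hall⟩
        have hneg : ∀ w ∈ H.clauseVerts i j v, w ≠ v → (w, false) ∈ S := by
          intro w hw hne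
          have hwfix : w ∉ H.Fix S := fun hf =>
            clause_not_leafVar H hcl hw hne (fix_leafVar hf)
          rw [mem_iff_valOf hAE, ← hag w hwfix]
          exact hall w hw hne
        have hvt : (v, true) ∈ S := by
          obtain ⟨u, hu, hut⟩ := hPhi i j v hcl
          by_cases huv : u = v
          · rwa [huv] at hut
          · exfalso
            have hf := hneg u hu huv
            obtain ⟨b₀, -, huniq⟩ := hAE.2 u (Finset.mem_univ u)
            have h1 := huniq true hut
            have h2 := huniq false hf
            rw [← h2] at h1
            exact Bool.noConfusion h1
        exact ⟨i, j, hcl, hvt, hneg⟩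
      · rintro ⟨i, j, hcl, hvt, hneg⟩
        refine ⟨i, j, hcl, ?_⟩
        intro w hw hne
        have hwfix : w ∉ H.Fix S := fun hf =>
          clause_not_leafVar H hcl hw hne (fix_leafVar hf)
        rw [hag w hwfix]
        have := (mem_iff_valOf hAE).mp (hneg w hw hne)
        exact this
    have hrep : rep H g = valOf S := by
      funext v
      by_cases hv : v ∈ H.Fix S
      · have hv' := hv
        obtain ⟨i, j, hcl, hvt, -⟩ := hv'
        rw [rep_of_forced ((hCF v).mpr hv)]
        unfold valOf
        rw [if_pos hvt]
      · rw [rep_of_not_forced (fun h => hv ((hCF v).mp h)), hag v hv]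
    rw [Sg, hrep, toLits_valOf hAE]

lemma filter_card_eq_nat_card (p : (V → Bool) → Prop) (hp : DecidablePred p) :
    (@Finset.filter _ p hp Finset.univ).card = Nat.card {g : V → Bool // p g} := by
  letI := hp
  rw [Nat.card_eq_fintype_card, Fintype.card_subtype]

lemma nat_card_eq_on (t : Finset V) (f : V → Bool) :
    Nat.card {g : V → Bool // ∀ v ∉ t, g v = f v} = 2 ^ t.card := by
  classical
  have e : {g : V → Bool // ∀ v ∉ t, g v = f v} ≃ ({v // v ∈ t} → Bool) :=
    { toFun := fun g v => g.1 v.1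
      invFun := fun h => ⟨fun v => if hv : v ∈ t then h ⟨v, hv⟩ else f v,
        fun v hv => dif_neg hv⟩
      left_inv := by
        rintro ⟨g, hg⟩
        apply Subtype.ext
        funext v
        by_cases hv : v ∈ t
        · simp [hv]
        · simp [hv, hg v hv]
      right_inv := by
        intro h
        funext v
        simp }
  rw [Nat.card_congr e, Nat.card_eq_fintype_card, Fintype.card_fun, Fintype.card_bool,
    Fintype.card_coe]

lemma card_fiber {H : BTB V} {S : Finset (V × Bool)} (hS : S ∈ H.SATH) :
    Nat.card {g : V → Bool // Sg H g = S} = 2 ^ (H.Fix S).ncard := by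
  classical
  have hfin : (H.Fix S).Finite := Set.toFinite _
  have e : {g : V → Bool // Sg H g = S} ≃
      {g : V → Bool // ∀ v ∉ hfin.toFinset, g v = valOf S v} :=
    Equiv.subtypeEquivRight (fun g => by
      rw [Sg_eq_iff hS g]
      constructor
      · intro h v hv
        exact h v (fun hm => hv (hfin.mem_toFinset.mpr hm))
      · intro h v hv
        exact h v (fun hm => hv (hfin.mem_toFinset.mp hm)))
  rw [Nat.card_congr e, nat_card_eq_on, Set.ncard_eq_toFinset_card _ hfin]

lemma pr_eq (H : BTB V) (E : Finset (V × Bool) → Prop) :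
    H.Pr E = ((Nat.card {g : V → Bool // E (Sg H g)}) : ℝ) / 2 ^ Fintype.card V := by
  classical
  have hncard : ∀ S : Finset (V × Bool), (H.Fix S).ncard ≤ Fintype.card V := by
    intro S
    calc (H.Fix S).ncard ≤ (Set.univ : Set V).ncard :=
          Set.ncard_le_ncard (Set.subset_univ _) Set.finite_univ
      _ = Fintype.card V := by rw [Set.ncard_univ, Nat.card_eq_fintype_card]
  have hcard : Nat.card {g : V → Bool // E (Sg H g)} =
      ∑ S ∈ H.SATH.filter E, 2 ^ (H.Fix S).ncard := by
    rw [← filter_card_eq_nat_card (fun g => E (Sg H g)) (Classical.decPred _)]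
    rw [Finset.card_eq_sum_card_fiberwise
      (f := Sg H) (t := H.SATH.filter E)
      (fun g hg => by
        rw [Finset.mem_coe, Finset.mem_filter] at hg ⊢
        exact ⟨Sg_mem_SATH H g, hg.2⟩)]
    apply Finset.sum_congr rfl
    intro S hS
    rw [Finset.mem_filter] at hS
    rw [← card_fiber hS.1,
      ← filter_card_eq_nat_card (fun g => Sg H g = S) (Classical.decPred _),
      Finset.filter_filter]
    congr 1
    ext g
    simp only [Finset.mem_filter, Finset.mem_univ, true_and]
    constructor
    · exact And.right
    · intro h; exact ⟨by rw [h]; exact hS.2, h⟩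
  rw [BTB.Pr, hcard]
  push_cast
  rw [Finset.sum_div]
  apply Finset.sum_congr rfl
  intro S _
  rw [BTB.weight, div_pow, one_pow,
    div_eq_div_iff (by positivity) (by positivity), one_mul, ← pow_add]
  congr 1
  have := hncard S
  omega

/-! #### Independence of events with disjoint supports -/

lemma nat_card_and_mul (D : Finset V) (P Q : (V → Bool) → Prop)
    (hP : ∀ g g' : V → Bool, (∀ v ∈ D, g v = g' v) → P g → P g')
    (hQ : ∀ g g' : V → Bool, (∀ v ∉ D, g v = g' v) → Q g → Q g') :
    Nat.card {g : V → Bool // P g ∧ Q g} * Nat.card (V → Bool) =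
      Nat.card {g : V → Bool // P g} * Nat.card {g : V → Bool // Q g} := by
  classical
  have hpc1 : ∀ g h : V → Bool, ∀ v ∈ D, D.piecewise g h v = g v :=
    fun g h v hv => Finset.piecewise_eq_of_mem _ _ _ hv
  have hpc2 : ∀ g h : V → Bool, ∀ v ∉ D, D.piecewise g h v = h v :=
    fun g h v hv => Finset.piecewise_eq_of_notMem _ _ _ hv
  rw [← filter_card_eq_nat_card (fun g => P g ∧ Q g) (Classical.decPred _),
    ← filter_card_eq_nat_card P (Classical.decPred _),
    ← filter_card_eq_nat_card Q (Classical.decPred _),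
    Nat.card_eq_fintype_card, ← Finset.card_univ,
    ← Finset.card_product, ← Finset.card_product]
  have hinv : ∀ g h : V → Bool,
      (D.piecewise (D.piecewise g h) (D.piecewise h g) = g) ∧
      (D.piecewise (D.piecewise h g) (D.piecewise g h) = h) := by
    intro g h
    constructor <;> funext v <;> by_cases hv : v ∈ D
    · rw [hpc1 _ _ v hv, hpc1 _ _ v hv]
    · rw [hpc2 _ _ v hv, hpc2 _ _ v hv]
    · rw [hpc1 _ _ v hv, hpc1 _ _ v hv]
    · rw [hpc2 _ _ v hv, hpc2 _ _ v hv]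
  apply Finset.card_nbij'
    (i := fun p => (D.piecewise p.1 p.2, D.piecewise p.2 p.1))
    (j := fun p => (D.piecewise p.1 p.2, D.piecewise p.2 p.1))
  · rintro ⟨g, h⟩ hp
    simp only [Finset.mem_coe, Finset.mem_product, Finset.mem_filter, Finset.mem_univ, true_and,
      and_true] at hp ⊢
    obtain ⟨hPg, hQg⟩ := hp
    exact ⟨hP g _ (fun v hv => (hpc1 g h v hv).symm) hPg,
      hQ g _ (fun v hv => (hpc2 h g v hv).symm) hQg⟩
  · rintro ⟨u, w⟩ hp
    simp only [Finset.mem_coe, Finset.mem_product, Finset.mem_filter, Finset.mem_univ, true_and,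
      and_true] at hp ⊢
    obtain ⟨hPu, hQw⟩ := hp
    exact ⟨hP u _ (fun v hv => (hpc1 u w v hv).symm) hPu,
      hQ w _ (fun v hv => (hpc2 u w v hv).symm) hQw⟩
  · rintro ⟨g, h⟩ -
    simp only [(hinv g h).1, (hinv g h).2]
  · rintro ⟨g, h⟩ -
    simp only [(hinv g h).1, (hinv g h).2]

lemma prod_indep {ι : Type*} [DecidableEq ι] (R : ι → (V → Bool) → Prop)
    (D : ι → Finset V) (s : Finset ι) :
    (∀ e ∈ s, ∀ g g' : V → Bool, (∀ v ∈ D e, g v = g' v) → R e g → R e g') →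
    (∀ e ∈ s, ∀ f ∈ s, e ≠ f → Disjoint (D e) (D f)) →
    Nat.card {g : V → Bool // ∀ e ∈ s, R e g} * Nat.card (V → Bool) ^ s.card =
      (∏ e ∈ s, Nat.card {g : V → Bool // R e g}) * Nat.card (V → Bool) := by
  classical
  induction s using Finset.induction_on with
  | empty =>
    intro _ _
    rw [Nat.card_congr (Equiv.subtypeUnivEquiv (fun g => by simp))]
    simp
  | @insert a s' ha ih =>
    intro hdep hdisj
    have hQdep : ∀ g g' : V → Bool, (∀ v ∉ D a, g v = g' v) →
        (∀ e ∈ s', R e g) → (∀ e ∈ s', R e g') := by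
      intro g g' hag hall e hes
      refine hdep e (Finset.mem_insert_of_mem hes) g g' ?_ (hall e hes)
      intro v hv
      apply hag
      intro hvDa
      have hne : e ≠ a := fun h => ha (h ▸ hes)
      exact (Finset.disjoint_left.mp
        (hdisj e (Finset.mem_insert_of_mem hes) a (Finset.mem_insert_self a s') hne)) hv hvDa
    have hstep := nat_card_and_mul (D a) (R a) (fun g => ∀ e ∈ s', R e g)
      (hdep a (Finset.mem_insert_self a s')) hQdep
    have hcongr : Nat.card {g : V → Bool // ∀ e ∈ Insert.insert a s', R e g} =
        Nat.card {g : V → Bool // R a g ∧ ∀ e ∈ s', R e g} :=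
      Nat.card_congr (Equiv.subtypeEquivRight (fun g => by
        simp [Finset.forall_mem_insert]))
    have ih' := ih (fun e he => hdep e (Finset.mem_insert_of_mem he))
      (fun e he f hf => hdisj e (Finset.mem_insert_of_mem he) f (Finset.mem_insert_of_mem hf))
    rw [hcongr, Finset.card_insert_of_notMem ha, Finset.prod_insert ha]
    calc Nat.card {g : V → Bool // R a g ∧ ∀ e ∈ s', R e g} *
            Nat.card (V → Bool) ^ (s'.card + 1)
        = (Nat.card {g : V → Bool // R a g ∧ ∀ e ∈ s', R e g} *
            Nat.card (V → Bool)) * Nat.card (V → Bool) ^ s'.card := by ring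
      _ = (Nat.card {g : V → Bool // R a g} *
            Nat.card {g : V → Bool // ∀ e ∈ s', R e g}) *
            Nat.card (V → Bool) ^ s'.card := by rw [hstep]
      _ = Nat.card {g : V → Bool // R a g} *
            (Nat.card {g : V → Bool // ∀ e ∈ s', R e g} *
            Nat.card (V → Bool) ^ s'.card) := by ring
      _ = Nat.card {g : V → Bool // R a g} *
            ((∏ e ∈ s', Nat.card {g : V → Bool // R e g}) * Nat.card (V → Bool)) := by
          rw [ih']
      _ = Nat.card {g : V → Bool // R a g} *
            (∏ e ∈ s', Nat.card {g : V → Bool // R e g}) * Nat.card (V → Bool) := by ring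

/-! #### The support of a pseudoedge event -/

/-- The common leaf of the pseudoedge `e` (junk value if not adjacent). -/
noncomputable def leafOf (H : BTB V) (e : Fin H.m × Fin H.m) : V :=
  if h : H.Adjacent e.1 e.2 then h.choose else (H.tree e.1).root

lemma leafOf_spec (H : BTB V) {e : Fin H.m × Fin H.m} (h : H.Adjacent e.1 e.2) :
    H.IsCommonLeaf e.1 e.2 (leafOf H e) := by
  rw [leafOf, dif_pos h]
  exact h.choose_spec

/-- The support of the event `Respects e`. -/
noncomputable def DSet (H : BTB V) (e : Fin H.m × Fin H.m) : Finset V :=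
  H.clauseVerts e.1 e.2 (leafOf H e) ∪
    Finset.univ.filter (fun w => ∃ v ∈ H.clauseVerts e.1 e.2 (leafOf H e),
      v ≠ (H.tree e.1).root ∧ v ≠ (H.tree e.2).root ∧ v ≠ leafOf H e ∧ H.Sibling v w)

lemma DSet_spec (H : BTB V) {e : Fin H.m × Fin H.m} (he : H.Adjacent e.1 e.2) {x : V}
    (hx : x ∈ DSet H e) :
    (x ∈ (H.tree e.1).verts ∨ x ∈ (H.tree e.2).verts) ∧
      (H.LeafVar x → x = leafOf H e) := by
  have hcl := leafOf_spec H he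
  rcases Finset.mem_union.mp hx with hx | hx
  · refine ⟨clauseVerts_mem_verts H hcl hx, ?_⟩
    intro hlv
    by_contra hne
    exact clause_not_leafVar H hcl hx hne hlv
  · obtain ⟨-, v, hv, h1, h2, h3, hs⟩ := Finset.mem_filter.mp hx
    exact ⟨sibling_mem_tree H hcl hv h3 hs,
      fun hlv => absurd hlv (sibling_not_leafVar H hs)⟩

lemma DSet_disjoint (H : BTB V) {M : Finset (Fin H.m × Fin H.m)}
    (hM : H.IsPseudomatching M) {e f : Fin H.m × Fin H.m} (he : e ∈ M) (hf : f ∈ M)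
    (hef : e ≠ f) : Disjoint (DSet H e) (DSet H f) := by
  classical
  have hadje : H.Adjacent e.1 e.2 := (hM.1 e he).2
  have hadjf : H.Adjacent f.1 f.2 := (hM.1 f hf).2
  obtain ⟨hne1, hne2, hne3, hne4⟩ := hM.2 e he f hf hef
  rw [Finset.disjoint_left]
  intro x hxe hxf
  obtain ⟨hte, hle⟩ := DSet_spec H hadje hxe
  obtain ⟨htf, hlf⟩ := DSet_spec H hadjf hxf
  have hlv : H.LeafVar x := by
    rcases hte with h1 | h1 <;> rcases htf with h2 | h2
    · exact ⟨e.1, f.1, hne1, (H.common_leaf e.1 f.1 hne1 x h1 h2).1,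
        (H.common_leaf e.1 f.1 hne1 x h1 h2).2⟩
    · exact ⟨e.1, f.2, hne2, (H.common_leaf e.1 f.2 hne2 x h1 h2).1,
        (H.common_leaf e.1 f.2 hne2 x h1 h2).2⟩
    · exact ⟨e.2, f.1, hne3, (H.common_leaf e.2 f.1 hne3 x h1 h2).1,
        (H.common_leaf e.2 f.1 hne3 x h1 h2).2⟩
    · exact ⟨e.2, f.2, hne4, (H.common_leaf e.2 f.2 hne4 x h1 h2).1,
        (H.common_leaf e.2 f.2 hne4 x h1 h2).2⟩
  have hxe' := hle hlv
  have hxf' := hlf hlv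
  have hcle := leafOf_spec H hadje
  have hclf := leafOf_spec H hadjf
  rw [← hxe'] at hcle
  rw [← hxf'] at hclf
  have hp := leaves_pair H hcle
  have hmem : f.1 ∈ ({e.1, e.2} : Finset (Fin H.m)) := by
    rw [← hp]
    exact Finset.mem_filter.mpr ⟨Finset.mem_univ _, hclf.2.1⟩
  simp only [Finset.mem_insert, Finset.mem_singleton] at hmem
  rcases hmem with h | h
  · exact hne1 h.symm
  · exact hne3 h.symm

lemma respects_depends (H : BTB V) {e : Fin H.m × Fin H.m} (he : H.Adjacent e.1 e.2)
    {g g' : V → Bool} (hag : ∀ v ∈ DSet H e, g v = g' v)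
    (hr : H.Respects e.1 e.2 (Sg H g)) : H.Respects e.1 e.2 (Sg H g') := by
  classical
  have hcl := leafOf_spec H he
  obtain ⟨ℓ', hcl', hneg, hsib⟩ := hr
  have hℓ : ℓ' = leafOf H e := clause_leaf_unique H hcl' hcl
  subst hℓ
  have hCV : ∀ v ∈ H.clauseVerts e.1 e.2 (leafOf H e), v ∈ DSet H e :=
    fun v hv => Finset.mem_union_left _ hv
  have hforced : Forced H g (leafOf H e) ↔ Forced H g' (leafOf H e) := by
    constructor
    · rintro ⟨i, j, hcl2, hall⟩
      refine ⟨e.1, e.2, hcl, ?_⟩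
      have hCVeq : H.clauseVerts i j (leafOf H e) = H.clauseVerts e.1 e.2 (leafOf H e) := by
        rcases clause_pair_cases H hcl hcl2 with ⟨rfl, rfl⟩ | ⟨rfl, rfl⟩
        · rfl
        · exact clauseVerts_comm H _ _ _
      intro w hw hne
      rw [← hag w (hCV w hw)]
      exact hall w (hCVeq ▸ hw) hne
    · rintro ⟨i, j, hcl2, hall⟩
      refine ⟨e.1, e.2, hcl, ?_⟩
      have hCVeq : H.clauseVerts i j (leafOf H e) = H.clauseVerts e.1 e.2 (leafOf H e) := by
        rcases clause_pair_cases H hcl hcl2 with ⟨rfl, rfl⟩ | ⟨rfl, rfl⟩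
        · rfl
        · exact clauseVerts_comm H _ _ _
      intro w hw hne
      rw [hag w (hCV w hw)]
      exact hall w (hCVeq ▸ hw) hne
  have hrepℓ : rep H g' (leafOf H e) = rep H g (leafOf H e) := by
    by_cases hf : Forced H g (leafOf H e)
    · rw [rep_of_forced (hforced.mp hf), rep_of_forced hf]
    · rw [rep_of_not_forced (fun c => hf (hforced.mpr c)), rep_of_not_forced hf,
        ← hag _ (hCV _ (mem_clauseVerts_self H e.1 e.2 (leafOf H e)))]
  refine ⟨leafOf H e, hcl, ?_, ?_⟩
  · intro v hv h1 h2
    rw [mem_Sg]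
    have hv0 : rep H g v = false := mem_Sg.mp (hneg v hv h1 h2)
    by_cases hvℓ : v = leafOf H e
    · subst hvℓ
      rw [hrepℓ]
      exact hv0
    · have hnl := clause_not_leafVar H hcl hv hvℓ
      rw [rep_of_not_leafVar hnl, ← hag v (hCV v hv)]
      rw [rep_of_not_leafVar hnl] at hv0
      exact hv0
  · intro v hv h1 h2 h3 w hw
    rw [mem_Sg]
    have hv0 : rep H g w = true := mem_Sg.mp (hsib v hv h1 h2 h3 w hw)
    have hnl := sibling_not_leafVar H hw
    have hwD : w ∈ DSet H e := Finset.mem_union_right _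
      (Finset.mem_filter.mpr ⟨Finset.mem_univ _, v, hv, h1, h2, h3, hw⟩)
    rw [rep_of_not_leafVar hnl, ← hag w hwD]
    rw [rep_of_not_leafVar hnl] at hv0
    exact hv0

end BTB


/-- for any pseudomatching `M` of a pseudoexpander `H`, the indicator
variables `X_{i,j}`, `{t_i,t_j} ∈ M`, are mutually independent. -/
theorem statement_9 (V : Type) [DecidableEq V] [Fintype V] (H : BTB V)
    (hH : H.IsPseudoexpander) (M : Finset (Fin H.m × Fin H.m))
    (hM : H.IsPseudomatching M)
    (M' : Finset (Fin H.m × Fin H.m)) (hM' : M' ⊆ M)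
    (a : Fin H.m × Fin H.m → Bool) :
    H.Pr (fun S => ∀ e ∈ M', (H.Respects e.1 e.2 S ↔ a e = true)) =
      ∏ e ∈ M', H.Pr (fun S => H.Respects e.1 e.2 S ↔ a e = true) := by
  classical
  have hadj : ∀ e ∈ M', H.Adjacent e.1 e.2 := fun e he => (hM.1 e (hM' he)).2
  have hdep : ∀ e ∈ M', ∀ g g' : V → Bool, (∀ v ∈ BTB.DSet H e, g v = g' v) →
      (H.Respects e.1 e.2 (BTB.Sg H g) ↔ a e = true) →
      (H.Respects e.1 e.2 (BTB.Sg H g') ↔ a e = true) := by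
    intro e he g g' hag hg
    have h1 : H.Respects e.1 e.2 (BTB.Sg H g) ↔ H.Respects e.1 e.2 (BTB.Sg H g') :=
      ⟨BTB.respects_depends H (hadj e he) hag,
       BTB.respects_depends H (hadj e he) (fun v hv => (hag v hv).symm)⟩
    exact h1.symm.trans hg
  have hdisj : ∀ e ∈ M', ∀ f ∈ M', e ≠ f → Disjoint (BTB.DSet H e) (BTB.DSet H f) :=
    fun e he f hf hef => BTB.DSet_disjoint H hM (hM' he) (hM' hf) hef
  have key := BTB.prod_indep
    (fun e (g : V → Bool) => H.Respects e.1 e.2 (BTB.Sg H g) ↔ a e = true)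
    (BTB.DSet H) M' hdep hdisj
  have hKnat : Nat.card (V → Bool) = 2 ^ Fintype.card V := by
    rw [Nat.card_eq_fintype_card, Fintype.card_fun, Fintype.card_bool]
  rw [hKnat] at key
  have lhs_eq : H.Pr (fun S => ∀ e ∈ M', (H.Respects e.1 e.2 S ↔ a e = true)) =
      ((Nat.card {g : V → Bool //
        ∀ e ∈ M', (H.Respects e.1 e.2 (BTB.Sg H g) ↔ a e = true)}) : ℝ) /
        2 ^ Fintype.card V :=
    BTB.pr_eq H _
  have rhs_eq : ∀ e ∈ M', H.Pr (fun S => H.Respects e.1 e.2 S ↔ a e = true) =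
      ((Nat.card {g : V → Bool //
        H.Respects e.1 e.2 (BTB.Sg H g) ↔ a e = true}) : ℝ) / 2 ^ Fintype.card V :=
    fun e _ => BTB.pr_eq H _
  rw [lhs_eq, Finset.prod_congr rfl rhs_eq, Finset.prod_div_distrib, Finset.prod_const]
  have h2 : (0 : ℝ) < 2 ^ Fintype.card V := by positivity
  rw [div_eq_div_iff h2.ne' (by positivity)]
  exact_mod_cast key

end NBPPaper
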